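/- Let q be nonzero in a field F with (q-q^{-1})(q^2-q^{-2}) ≠ 0, a ∈ F nonzero, d ∈ ℕ. Define θ_i = a q^{d-2i} + a^{-1} q^{2i-d} and t_i = a^{2i-d} q^{2i(d-i)} for 0 ≤ i ≤ d. Then for all i, j with 0 ≤ i, j ≤ d and |i - j| = 1, one has t_j/t_i = 1 + ((θ_i - θ_j)/(q - q^{-1})) · ((q θ_i - q^{-1} θ_j)/(q^2 - q^{-2})). -/
import Mathlib

private lemma key1 {F : Type*} [Field F] (q u v : F) (hq : q ≠ 0)
    (hq1 : q - q⁻¹ ≠ 0) (hq2 : q^2 - q⁻¹^2 ≠ 0) (huv : u * v = 1) :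
    u^2 * (q^2)⁻¹ =
      1 + ((u + v) - (u*(q^2)⁻¹ + v*q^2)) / (q - q⁻¹) *
        ((q*(u + v) - q⁻¹*(u*(q^2)⁻¹ + v*q^2)) / (q^2 - q⁻¹^2)) := by
  have h : ((u + v) - (u*(q^2)⁻¹ + v*q^2)) / (q - q⁻¹) *
        ((q*(u + v) - q⁻¹*(u*(q^2)⁻¹ + v*q^2)) / (q^2 - q⁻¹^2))
      = u^2 * (q^2)⁻¹ - u * v := by
    have h12 : (q - q⁻¹) * (q^2 - q⁻¹^2) ≠ 0 := mul_ne_zero hq1 hq2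
    rw [div_mul_div_comm, div_eq_iff h12]
    field_simp
    ring
  rw [h, huv]; ring

private lemma key2 {F : Type*} [Field F] (q u v : F) (hq : q ≠ 0)
    (hq1 : q - q⁻¹ ≠ 0) (hq2 : q^2 - q⁻¹^2 ≠ 0) (huv : u * v = 1) :
    v^2 * q^2 =
      1 + ((u*(q^2)⁻¹ + v*q^2) - (u + v)) / (q - q⁻¹) *
        ((q*(u*(q^2)⁻¹ + v*q^2) - q⁻¹*(u + v)) / (q^2 - q⁻¹^2)) := by
  have h : ((u*(q^2)⁻¹ + v*q^2) - (u + v)) / (q - q⁻¹) *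
        ((q*(u*(q^2)⁻¹ + v*q^2) - q⁻¹*(u + v)) / (q^2 - q⁻¹^2))
      = v^2 * q^2 - u * v := by
    have h12 : (q - q⁻¹) * (q^2 - q⁻¹^2) ≠ 0 := mul_ne_zero hq1 hq2
    rw [div_mul_div_comm, div_eq_iff h12]
    field_simp
    ring
  rw [h, huv]; ring

theorem stmt_6 {F : Type*} [Field F] (q : F) (hq : q ≠ 0)
    (hq1 : q - q⁻¹ ≠ 0) (hq2 : q^2 - q⁻¹^2 ≠ 0)
    (a : F) (ha : a ≠ 0) (d : ℕ)
    (θ : ℕ → F)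
    (hθ : ∀ i : ℕ, i ≤ d →
      θ i = a * q ^ ((d : ℤ) - 2 * i) + a⁻¹ * q ^ (2 * (i : ℤ) - d))
    (t : ℕ → F)
    (ht : ∀ i : ℕ, i ≤ d → t i = a ^ (2 * (i : ℤ) - d) * q ^ (2 * i * (d - i)))
    (i j : ℕ) (hi : i ≤ d) (hj : j ≤ d) (hij : i = j + 1 ∨ j = i + 1) :
    t j / t i = 1 + (θ i - θ j) / (q - q⁻¹) * ((q * θ i - q⁻¹ * θ j) / (q^2 - q⁻¹^2)) := by
  rcases hij with rfl | rfl
  · -- i = j + 1 : θ j = u + v, θ (j+1) = u(q²)⁻¹ + vq², t j / t (j+1) = v²q²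
    set y : F := q ^ ((d:ℤ) - 2 * j) with hy_def
    have hy0 : y ≠ 0 := zpow_ne_zero _ hq
    have eθj : θ j = a * y + a⁻¹ * y⁻¹ := by
      rw [hθ j hj, show (2 * (j:ℤ) - d) = -((d:ℤ) - 2 * j) from by ring, zpow_neg]
    have eθi : θ (j+1) = (a * y) * (q^2)⁻¹ + (a⁻¹ * y⁻¹) * q^2 := by
      rw [hθ (j+1) hi]
      rw [show ((d:ℤ) - 2 * (↑(j+1):ℤ)) = ((d:ℤ) - 2 * j) + -((2:ℕ):ℤ) from by push_cast; ring]
      rw [show (2 * (↑(j+1):ℤ) - d) = -((d:ℤ) - 2 * j) + ((2:ℕ):ℤ) from by push_cast; ring]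
      rw [zpow_add₀ hq, zpow_add₀ hq, zpow_neg, zpow_neg, zpow_natCast]
      ring
    have et : t j / t (j+1) = (a⁻¹ * y⁻¹)^2 * q^2 := by
      rw [ht j hj, ht (j+1) hi]
      have c1 : ((d - j : ℕ) : ℤ) = (d:ℤ) - j := by omega
      have c2 : ((d - (j+1) : ℕ) : ℤ) = (d:ℤ) - j - 1 := by omega
      have hn : ((2*(j+1)*(d-(j+1)) : ℕ) : ℤ)
          = ((2*j*(d-j) : ℕ) : ℤ) + (((d:ℤ) - 2*j) + (((d:ℤ) - 2*j) + -((2:ℕ):ℤ))) := by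
        push_cast [c1, c2]; ring
      have hn' : ((2*(↑(j+1):ℤ)) - d) = (2 * (j:ℤ) - d) + ((2:ℕ):ℤ) := by push_cast; ring
      rw [← zpow_natCast q (2*(j+1)*(d-(j+1))), ← zpow_natCast q (2*j*(d-j)), hn, hn']
      rw [zpow_add₀ hq, zpow_add₀ hq, zpow_add₀ hq, zpow_add₀ ha, zpow_neg, zpow_natCast,
        zpow_natCast, zpow_natCast]
      have hA : a ^ (2 * (j:ℤ) - d) ≠ 0 := zpow_ne_zero _ ha
      have hP : q ^ ((2*j*(d-j)) : ℕ) ≠ 0 := pow_ne_zero _ hq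
      field_simp
      ring
    rw [eθj, eθi, et]
    exact key2 q (a * y) (a⁻¹ * y⁻¹) hq hq1 hq2 (by field_simp)
  · -- j = i + 1 : θ i = u + v, θ (i+1) = u(q²)⁻¹ + vq², t (i+1) / t i = u²(q²)⁻¹
    set y : F := q ^ ((d:ℤ) - 2 * i) with hy_def
    have hy0 : y ≠ 0 := zpow_ne_zero _ hq
    have eθi : θ i = a * y + a⁻¹ * y⁻¹ := by
      rw [hθ i hi, show (2 * (i:ℤ) - d) = -((d:ℤ) - 2 * i) from by ring, zpow_neg]
    have eθj : θ (i+1) = (a * y) * (q^2)⁻¹ + (a⁻¹ * y⁻¹) * q^2 := by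
      rw [hθ (i+1) hj]
      rw [show ((d:ℤ) - 2 * (↑(i+1):ℤ)) = ((d:ℤ) - 2 * i) + -((2:ℕ):ℤ) from by push_cast; ring]
      rw [show (2 * (↑(i+1):ℤ) - d) = -((d:ℤ) - 2 * i) + ((2:ℕ):ℤ) from by push_cast; ring]
      rw [zpow_add₀ hq, zpow_add₀ hq, zpow_neg, zpow_neg, zpow_natCast]
      ring
    have et : t (i+1) / t i = (a * y)^2 * (q^2)⁻¹ := by
      rw [ht i hi, ht (i+1) hj]
      have c1 : ((d - i : ℕ) : ℤ) = (d:ℤ) - i := by omega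
      have c2 : ((d - (i+1) : ℕ) : ℤ) = (d:ℤ) - i - 1 := by omega
      have hn : ((2*(i+1)*(d-(i+1)) : ℕ) : ℤ)
          = ((2*i*(d-i) : ℕ) : ℤ) + (((d:ℤ) - 2*i) + (((d:ℤ) - 2*i) + -((2:ℕ):ℤ))) := by
        push_cast [c1, c2]; ring
      have hn' : ((2*(↑(i+1):ℤ)) - d) = (2 * (i:ℤ) - d) + ((2:ℕ):ℤ) := by push_cast; ring
      rw [← zpow_natCast q (2*(i+1)*(d-(i+1))), ← zpow_natCast q (2*i*(d-i)), hn, hn']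
      rw [zpow_add₀ hq, zpow_add₀ hq, zpow_add₀ hq, zpow_add₀ ha, zpow_neg, zpow_natCast,
        zpow_natCast, zpow_natCast]
      have hA : a ^ (2 * (i:ℤ) - d) ≠ 0 := zpow_ne_zero _ ha
      have hP : q ^ ((2*i*(d-i)) : ℕ) ≠ 0 := pow_ne_zero _ hq
      field_simp
      ring
    rw [eθi, eθj, et]
    exact key1 q (a * y) (a⁻¹ * y⁻¹) hq hq1 hq2 (by field_simp)
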